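/- Let p be an odd prime, α ≥ 1, n ∈ {±1}, t ∈ ℤ with t² - 4n = d·ℓ² (d a fundamental discriminant, ℓ > 0, t² - 4n not a square). If ord_p(t² - 4n) < α and d is a quadratic residue mod p (with (d/p) = 1), then the set of ξ ∈ ℤ_p satisfying ξ² - tξ + n ≡ 0 mod p^α equals { t/2 ± (√d)·ℓ/2 + p^{α - ord_p(ℓ)}·u : u ∈ ℤ_p }, where √d denotes a square root of d in ℤ_p. -/

import Mathlib

/-- A fundamental discriminant. -/
def IsFundamentalDiscriminant (d : ℤ) : Prop :=
  (d % 4 = 1 ∧ Squarefree d ∧ d ≠ 1) ∨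
    (d % 4 = 0 ∧ Squarefree (d / 4) ∧ (d / 4) % 4 ≠ 1)

lemma aux_dvd_iff {p : ℕ} [hp : Fact p.Prime] (hp2 : p ≠ 2)
    (α m : ℕ) (hα : 2 * m < α) (a y A : ℤ_[p])
    (ha : ‖a‖ = (p : ℝ) ^ (-(m : ℤ)))
    (hid : (y - a) * (y + a) = 4 * A) :
    (p : ℤ_[p]) ^ α ∣ A ↔
      ∃ u : ℤ_[p], y = a + 2 * (p : ℤ_[p]) ^ (α - m) * u ∨
        y = -a + 2 * (p : ℤ_[p]) ^ (α - m) * u := by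
  have hp1 : (1 : ℝ) < p := by exact_mod_cast hp.out.one_lt
  have hp0 : (0 : ℝ) < p := lt_trans one_pos hp1
  have hdvd : ∀ (x : ℤ_[p]) (k : ℕ), (p : ℤ_[p]) ^ k ∣ x ↔ ‖x‖ ≤ (p : ℝ) ^ (-(k : ℤ)) :=
    fun x k => Ideal.mem_span_singleton.symm.trans (PadicInt.norm_le_pow_iff_mem_span_pow x k).symm
  have h2 : ‖(2 : ℤ_[p])‖ = 1 := by
    refine le_antisymm (PadicInt.norm_le_one _) (le_of_not_gt fun hlt => ?_)
    have := (PadicInt.norm_int_lt_one_iff_dvd (2 : ℤ)).mp (by simpa using hlt)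
    have : p ∣ 2 := by exact_mod_cast this
    exact hp2 ((Nat.prime_dvd_prime_iff_eq hp.out Nat.prime_two).mp this)
  have h4 : ‖(4 : ℤ_[p])‖ = 1 := by
    have : (4 : ℤ_[p]) = 2 * 2 := by norm_num
    rw [this, norm_mul, h2, mul_one]
  have hmα : m < α := by omega
  have hkcast : ((α - m : ℕ) : ℤ) = (α : ℤ) - m := by omega
  obtain ⟨w, h2w⟩ : ∃ w : ℤ_[p], 2 * w = 1 := by
    obtain ⟨u, hu⟩ := PadicInt.isUnit_iff.mpr h2
    exact ⟨u.inv, by rw [← hu]; exact u.val_inv⟩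
  constructor
  · intro hA
    have hprod : ‖y - a‖ * ‖y + a‖ ≤ (p : ℝ) ^ (-(α : ℤ)) := by
      rw [← norm_mul, hid, norm_mul, h4, one_mul]
      exact (hdvd A α).mp hA
    have main : ∀ b : ℤ_[p], ‖b‖ = (p : ℝ) ^ (-(m : ℤ)) →
        ‖y - b‖ * ‖y + b‖ ≤ (p : ℝ) ^ (-(α : ℤ)) → ‖y - b‖ ≤ ‖y + b‖ →
        (p : ℤ_[p]) ^ (α - m) ∣ (y - b) := by
      intro b hb hpr hle
      have hmax : (p : ℝ) ^ (-(m : ℤ)) ≤ ‖y + b‖ := by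
        have he : (2 : ℤ_[p]) * b = (y + b) + (-(y - b)) := by ring
        have h1 : ‖(2 : ℤ_[p]) * b‖ = (p : ℝ) ^ (-(m : ℤ)) := by
          rw [norm_mul, h2, one_mul, hb]
        have h3 := PadicInt.nonarchimedean (y + b) (-(y - b))
        rw [← he, h1, norm_neg, max_eq_left hle] at h3
        exact h3
      rw [hdvd, hkcast]
      have key : ‖y - b‖ ≤ (p : ℝ) ^ (-(α : ℤ)) / (p : ℝ) ^ (-(m : ℤ)) := by
        rw [le_div_iff₀ (zpow_pos hp0 _)]
        calc ‖y - b‖ * (p : ℝ) ^ (-(m:ℤ)) ≤ ‖y - b‖ * ‖y + b‖ :=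
              mul_le_mul_of_nonneg_left hmax (norm_nonneg _)
          _ ≤ (p : ℝ) ^ (-(α : ℤ)) := hpr
      calc ‖y - b‖ ≤ (p : ℝ) ^ (-(α : ℤ)) / (p : ℝ) ^ (-(m : ℤ)) := key
        _ = (p : ℝ) ^ (-((α:ℤ) - m)) := by
            rw [← zpow_sub₀ (ne_of_gt hp0)]; congr 1; ring
    rcases le_total ‖y - a‖ ‖y + a‖ with hle | hle
    · obtain ⟨v, hv⟩ := main a ha hprod hle
      exact ⟨w * v, Or.inl (by linear_combination hv - (p : ℤ_[p]) ^ (α - m) * v * h2w)⟩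
    · have hprod' : ‖y - (-a)‖ * ‖y + (-a)‖ ≤ (p : ℝ) ^ (-(α : ℤ)) := by
        rw [sub_neg_eq_add, ← sub_eq_add_neg, mul_comm]; exact hprod
      have hle' : ‖y - (-a)‖ ≤ ‖y + (-a)‖ := by
        rw [sub_neg_eq_add, ← sub_eq_add_neg]; exact hle
      obtain ⟨v, hv⟩ := main (-a) (by rw [norm_neg]; exact ha) hprod' hle'
      rw [sub_neg_eq_add] at hv
      exact ⟨w * v, Or.inr (by linear_combination hv - (p : ℤ_[p]) ^ (α - m) * v * h2w)⟩
  · have rev : ∀ b u : ℤ_[p], ‖b‖ = (p : ℝ) ^ (-(m : ℤ)) → (y - b) * (y + b) = 4 * A →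
        y = b + 2 * (p : ℤ_[p]) ^ (α - m) * u → (p : ℤ_[p]) ^ α ∣ A := by
      intro b u hb hbid hyu
      have hy1 : ‖y - b‖ ≤ (p : ℝ) ^ (-((α - m : ℕ) : ℤ)) := by
        have he : y - b = 2 * ((p : ℤ_[p]) ^ (α - m) * u) := by linear_combination hyu
        rw [he, norm_mul, h2, one_mul, norm_mul, PadicInt.norm_p_pow]
        calc _ ≤ (p : ℝ) ^ (-((α - m : ℕ) : ℤ)) * 1 :=
              mul_le_mul_of_nonneg_left (PadicInt.norm_le_one u) (zpow_nonneg hp0.le _)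
          _ = _ := mul_one _
      have hy2 : ‖y + b‖ ≤ (p : ℝ) ^ (-(m : ℤ)) := by
        have he : y + b = 2 * b + 2 * ((p : ℤ_[p]) ^ (α - m) * u) := by linear_combination hyu
        rw [he]
        refine le_trans (PadicInt.nonarchimedean _ _) (max_le ?_ ?_)
        · rw [norm_mul, h2, one_mul, hb]
        · rw [norm_mul, h2, one_mul, norm_mul, PadicInt.norm_p_pow]
          calc _ ≤ (p : ℝ) ^ (-((α - m : ℕ) : ℤ)) * 1 :=
                mul_le_mul_of_nonneg_left (PadicInt.norm_le_one u) (zpow_nonneg hp0.le _)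
            _ = (p : ℝ) ^ (-((α - m : ℕ) : ℤ)) := mul_one _
            _ ≤ (p : ℝ) ^ (-(m : ℤ)) := by
                apply zpow_le_zpow_right₀ hp1.le
                omega
      have h4A : (p : ℤ_[p]) ^ α ∣ 4 * A := by
        rw [hdvd, ← hbid, norm_mul]
        calc ‖y - b‖ * ‖y + b‖
            ≤ (p : ℝ) ^ (-((α - m : ℕ) : ℤ)) * (p : ℝ) ^ (-(m : ℤ)) :=
              mul_le_mul hy1 hy2 (norm_nonneg _) (zpow_nonneg hp0.le _)
          _ = (p : ℝ) ^ (-(α : ℤ)) := by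
              rw [← zpow_add₀ (ne_of_gt hp0), hkcast]; congr 1; ring
      obtain ⟨i, hi⟩ : ∃ i : ℤ_[p], 4 * i = 1 := ⟨w * w, by linear_combination (2 * w + 1) * h2w⟩
      have hAi : A = i * (4 * A) := by linear_combination -A * hi
      rw [hAi]; exact Dvd.dvd.mul_left h4A i
    rintro ⟨u, hu | hu⟩
    · exact rev a u ha hid hu
    · exact rev (-a) u (by rw [norm_neg]; exact ha) (by linear_combination hid) hu

/-- Let `p` be an odd prime, `α ≥ 1`, `n ∈ {±1}`, `t ∈ ℤ` with
`t² - 4n = d·ℓ²` (`d` a fundamental discriminant, `ℓ > 0`, `t² - 4n` not a square).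
If `ord_p(t² - 4n) < α` and `d` is a quadratic residue mod `p` (Legendre symbol `1`),
then the set of `ξ ∈ ℤ_p` satisfying `ξ² - tξ + n ≡ 0 mod p^α` equals
`{ t/2 ± √d·ℓ/2 + p^{α - ord_p ℓ}·u : u ∈ ℤ_p }`, where `√d = r` is a square root of
`d` in `ℤ_p` (written via `2ξ = t ± rℓ + 2·p^{α - ord_p ℓ}·u`). -/
theorem padic_roots_low_valuation (p : ℕ) [hp : Fact p.Prime] (hp2 : p ≠ 2)
    (α : ℕ) (hα : 1 ≤ α) (n t : ℤ) (hn : n = 1 ∨ n = -1)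
    (d : ℤ) (ℓ : ℕ) (hℓ : 0 < ℓ) (hd : IsFundamentalDiscriminant d)
    (hdec : t ^ 2 - 4 * n = d * (ℓ : ℤ) ^ 2)
    (hns : ¬IsSquare (t ^ 2 - 4 * n))
    (hval : padicValInt p (t ^ 2 - 4 * n) < α)
    (hleg : legendreSym p d = 1)
    (r : ℤ_[p]) (hr : r ^ 2 = (d : ℤ_[p])) :
    {ξ : ℤ_[p] | (p : ℤ_[p]) ^ α ∣ (ξ ^ 2 - (t : ℤ_[p]) * ξ + (n : ℤ_[p]))} =
      {ξ : ℤ_[p] | ∃ u : ℤ_[p],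
        2 * ξ = (t : ℤ_[p]) + r * (ℓ : ℤ_[p]) +
            2 * (p : ℤ_[p]) ^ (α - padicValNat p ℓ) * u ∨
        2 * ξ = (t : ℤ_[p]) - r * (ℓ : ℤ_[p]) +
            2 * (p : ℤ_[p]) ^ (α - padicValNat p ℓ) * u} := by
  have hpd : ¬ (p : ℤ) ∣ d := by
    intro h
    have h0 : legendreSym p d = 0 :=
      (legendreSym.eq_zero_iff p d).mpr (by rwa [ZMod.intCast_zmod_eq_zero_iff_dvd])
    rw [hleg] at h0; exact one_ne_zero h0
  have hd0 : d ≠ 0 := fun h => hpd (h ▸ dvd_zero _)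
  have hℓZ : ((ℓ : ℤ)) ≠ 0 := by exact_mod_cast hℓ.ne'
  have hval2 : padicValInt p (t ^ 2 - 4 * n) = 2 * (padicValNat p ℓ) := by
    rw [hdec, padicValInt.mul hd0 (pow_ne_zero 2 hℓZ), padicValInt.eq_zero_of_not_dvd hpd,
      zero_add, show ((ℓ : ℤ) ^ 2) = ((ℓ ^ 2 : ℕ) : ℤ) by push_cast; ring,
      padicValInt.of_nat, padicValNat.pow ℓ 2]
  have h2m : 2 * (padicValNat p ℓ) < α := by rw [hval2] at hval; exact hval
  -- norm of ℓ
  obtain ⟨c, hc⟩ : p ^ (padicValNat p ℓ) ∣ ℓ := pow_padicValNat_dvd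
  have hpc : ¬ p ∣ c := by
    intro h
    refine pow_succ_padicValNat_not_dvd (p := p) hℓ.ne' ?_
    calc p ^ (padicValNat p ℓ + 1) = p ^ padicValNat p ℓ * p := pow_succ _ _
      _ ∣ p ^ padicValNat p ℓ * c := mul_dvd_mul_left _ h
      _ = ℓ := hc.symm
  have hcnorm : ‖(c : ℤ_[p])‖ = 1 := by
    refine le_antisymm (PadicInt.norm_le_one _) (le_of_not_gt fun hlt => hpc ?_)
    have := (PadicInt.norm_int_lt_one_iff_dvd (c : ℤ)).mp (by rwa [Int.cast_natCast])
    exact_mod_cast this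
  have hlnorm : ‖((ℓ : ℕ) : ℤ_[p])‖ = (p : ℝ) ^ (-((padicValNat p ℓ) : ℤ)) := by
    have hcast : ((ℓ : ℕ) : ℤ_[p]) = (p : ℤ_[p]) ^ (padicValNat p ℓ) * c := by exact_mod_cast congrArg (Nat.cast : ℕ → ℤ_[p]) hc
    rw [hcast, norm_mul, PadicInt.norm_p_pow, hcnorm, mul_one]
  have hdnorm : ‖((d : ℤ) : ℤ_[p])‖ = 1 := by
    refine le_antisymm (PadicInt.norm_le_one _) (le_of_not_gt fun hlt => hpd ?_)
    exact (PadicInt.norm_int_lt_one_iff_dvd d).mp hlt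
  have hrnorm : ‖r‖ = 1 := by
    have hsq : ‖r‖ ^ 2 = 1 := by rw [← norm_pow, hr, hdnorm]
    have h0 : (‖r‖ - 1) * (‖r‖ + 1) = 0 := by nlinarith
    rcases mul_eq_zero.mp h0 with h | h
    · linarith
    · nlinarith [norm_nonneg r]
  have ha : ‖r * ((ℓ : ℕ) : ℤ_[p])‖ = (p : ℝ) ^ (-((padicValNat p ℓ) : ℤ)) := by
    rw [norm_mul, hrnorm, one_mul, hlnorm]
  have hdec' : (t : ℤ_[p]) ^ 2 - 4 * (n : ℤ_[p]) = (d : ℤ_[p]) * ((ℓ : ℕ) : ℤ_[p]) ^ 2 := by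
    have := congrArg (Int.cast : ℤ → ℤ_[p]) hdec
    push_cast at this
    exact_mod_cast hdec
  ext ξ
  simp only [Set.mem_setOf_eq]
  have hid : (2 * ξ - t - r * ((ℓ : ℕ) : ℤ_[p])) * (2 * ξ - t + r * ((ℓ : ℕ) : ℤ_[p])) =
      4 * (ξ ^ 2 - (t : ℤ_[p]) * ξ + (n : ℤ_[p])) := by
    linear_combination hdec' - ((ℓ : ℕ) : ℤ_[p]) ^ 2 * hr
  rw [aux_dvd_iff hp2 α (padicValNat p ℓ) h2m (r * ((ℓ : ℕ) : ℤ_[p])) (2 * ξ - t) _ ha hid]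
  constructor
  · rintro ⟨u, h | h⟩
    · exact ⟨u, Or.inl (by linear_combination h)⟩
    · exact ⟨u, Or.inr (by linear_combination h)⟩
  · rintro ⟨u, h | h⟩
    · exact ⟨u, Or.inl (by linear_combination h)⟩
    · exact ⟨u, Or.inr (by linear_combination h)⟩
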